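/- arXiv:1410.5543 — 2 statements merged into one kernel-verified Lean document; each statement's English description precedes it below -/
import Mathlib

section
/- Let K be an abstract simplicial complex on [m]. The ℤ-linear map μ : ⊕_{ω⊆[m]} C̃_*(K_ω) → C_*((D^1,S^0)^K) sending a simplex σ ∈ K_ω (viewed as a basis element of C̃_*(K_ω)) to the word u_σ ε_{ω∖σ} is a bijective chain map that raises degrees by one; that is, μ is an isomorphism of chain complexes after shifting degrees up by one. -/
structure ASC (m : ℕ) where
  faces : Set (Finset (Fin m))
  empty_mem : ∅ ∈ faces
  down_closed : ∀ {σ τ : Finset (Fin m)}, σ ∈ faces → τ ⊆ σ → τ ∈ faces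

def csg {m : ℕ} (i : Fin m) (σ : Finset (Fin m)) : ℤ :=
  (-1) ^ (σ.filter (fun j => j < i)).card

variable {m : ℕ}

/-- Index of the cellular basis words `u_σ ε_τ` (equivalently `u^σ t^τ`). -/
def DSIdx (K : ASC m) : Type :=
  {p : Finset (Fin m) × Finset (Fin m) // p.1 ∈ K.faces ∧ Disjoint p.1 p.2}

/-- cellular chains of the real moment-angle complex -/
abbrev DSChain (K : ASC m) : Type := DSIdx K →₀ ℤ

/-- the boundary `∂(u_σ ε_τ) = ∑_{i ∈ σ} (-1)^{(i,σ)} u_{σ∖i} ε_{τ∪i}` -/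
noncomputable def DSbnd (K : ASC m) : DSChain K →ₗ[ℤ] DSChain K :=
  Finsupp.lift (DSChain K) ℤ (DSIdx K) fun b =>
    ∑ i ∈ b.1.1, csg i b.1.1 •
      Finsupp.single (⟨(b.1.1.erase i, insert i b.1.2),
        ⟨K.down_closed b.2.1 (Finset.erase_subset _ _), by
          refine Finset.disjoint_left.2 fun a ha hb => ?_
          rcases Finset.mem_insert.1 hb with h | h
          · exact (Finset.mem_erase.1 ha).1 h
          · exact (Finset.disjoint_left.1 b.2.2 (Finset.mem_of_mem_erase ha)) h⟩⟩ : DSIdx K)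
        (1 : ℤ)

/-- degree of a cellular basis word -/
def DSdeg {K : ASC m} (b : DSIdx K) : ℤ := b.1.1.card

/-- index of basis of `⊕_ω C̃_*(K_ω)` : pairs `(ω, σ)` with `σ ∈ K_ω`. -/
def PairIdx (K : ASC m) : Type :=
  {p : Finset (Fin m) × Finset (Fin m) // p.2 ⊆ p.1 ∧ p.2 ∈ K.faces}

abbrev PairChain (K : ASC m) : Type := PairIdx K →₀ ℤ

/-- the boundary of the direct sum of augmented chain complexes of full subcomplexes -/
noncomputable def Pairbnd (K : ASC m) : PairChain K →ₗ[ℤ] PairChain K :=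
  Finsupp.lift (PairChain K) ℤ (PairIdx K) fun b =>
    ∑ i ∈ b.1.2, csg i b.1.2 •
      Finsupp.single (⟨(b.1.1, b.1.2.erase i),
        ⟨(Finset.erase_subset _ _).trans b.2.1,
         K.down_closed b.2.2 (Finset.erase_subset _ _)⟩⟩ : PairIdx K) (1 : ℤ)

/-- degree of `σ ∈ C̃_*(K_ω)` is `card σ - 1`. -/
def Pairdeg {K : ASC m} (b : PairIdx K) : ℤ := (b.1.2.card : ℤ) - 1

/-- the map `μ` sending `σ ∈ C̃_*(K_ω)` to the word `u_σ ε_{ω∖σ}` -/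
noncomputable def muMap (K : ASC m) : PairChain K →ₗ[ℤ] DSChain K :=
  Finsupp.lift (DSChain K) ℤ (PairIdx K) fun b =>
    Finsupp.single (⟨(b.1.2, b.1.1 \ b.1.2), ⟨b.2.2, Finset.disjoint_sdiff⟩⟩ : DSIdx K) (1 : ℤ)

open Classical in
noncomputable def partSub {ι α : Type*} (f : ι → α) (a : α) : Submodule ℤ (ι →₀ ℤ) where
  carrier := {x | ∀ b ∈ x.support, f b = a}
  add_mem' := by
    intro x y hx hy b hb
    rcases Finset.mem_union.1 (Finsupp.support_add hb) with h | h
    · exact hx b h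
    · exact hy b h
  zero_mem' := by intro b hb; simp at hb
  smul_mem' := by
    intro c x hx b hb
    exact hx b (Finsupp.support_smul hb)

lemma Pairbnd_single (K : ASC m) (b : PairIdx K) :
    Pairbnd K (Finsupp.single b 1) = ∑ i ∈ b.1.2, csg i b.1.2 •
      Finsupp.single (⟨(b.1.1, b.1.2.erase i),
        ⟨(Finset.erase_subset _ _).trans b.2.1,
         K.down_closed b.2.2 (Finset.erase_subset _ _)⟩⟩ : PairIdx K) (1 : ℤ) := by
  rw [Pairbnd, Finsupp.lift_apply, Finsupp.sum_single_index, one_smul]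
  · simp
    rfl
  · simp

lemma DSbnd_single (K : ASC m) (b : DSIdx K) :
    DSbnd K (Finsupp.single b 1) = ∑ i ∈ b.1.1, csg i b.1.1 •
      Finsupp.single (⟨(b.1.1.erase i, insert i b.1.2),
        ⟨K.down_closed b.2.1 (Finset.erase_subset _ _), by
          refine Finset.disjoint_left.2 fun a ha hb => ?_
          rcases Finset.mem_insert.1 hb with h | h
          · exact (Finset.mem_erase.1 ha).1 h
          · exact (Finset.disjoint_left.1 b.2.2 (Finset.mem_of_mem_erase ha)) h⟩⟩ : DSIdx K)
        (1 : ℤ) := by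
  rw [DSbnd, Finsupp.lift_apply, Finsupp.sum_single_index, one_smul]
  · simp
    rfl
  · simp

def idxEquiv (K : ASC m) : PairIdx K ≃ DSIdx K where
  toFun b := ⟨(b.1.2, b.1.1 \ b.1.2), ⟨b.2.2, Finset.disjoint_sdiff⟩⟩
  invFun c := ⟨(c.1.1 ∪ c.1.2, c.1.1), ⟨Finset.subset_union_left, c.2.1⟩⟩
  left_inv b := by
    obtain ⟨⟨ω, σ⟩, hσω, hσ⟩ := b
    apply Subtype.ext
    simp only [Prod.mk.injEq]
    simp [Finset.union_sdiff_of_subset hσω]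
  right_inv c := by
    obtain ⟨⟨σ, τ⟩, hσ, hd⟩ := c
    apply Subtype.ext
    simp only [Prod.mk.injEq]
    simp [Finset.union_sdiff_cancel_left hd]

lemma muMap_single (K : ASC m) (b : PairIdx K) :
    muMap K (Finsupp.single b 1) = Finsupp.single (idxEquiv K b) 1 := by
  simp [muMap, idxEquiv]
  rfl

lemma muMap_eq (K : ASC m) :
    muMap K = (Finsupp.domLCongr (idxEquiv K) :
      PairChain K ≃ₗ[ℤ] DSChain K).toLinearMap := by
  apply Finsupp.lhom_ext'
  intro b
  apply LinearMap.ext_ring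
  simp [muMap_single, Finsupp.domLCongr, Finsupp.domCongr, Finsupp.equivMapDomain_single]

theorem stmt3 (K : ASC m) :
    Function.Bijective (muMap K) ∧
    (∀ x : PairChain K, muMap K (Pairbnd K x) = DSbnd K (muMap K x)) ∧
    (∀ (p : ℤ) (x : PairChain K), x ∈ partSub Pairdeg p → muMap K x ∈ partSub DSdeg (p + 1)) := by
  refine ⟨?_, ?_, ?_⟩
  · rw [muMap_eq]
    exact (Finsupp.domLCongr (idxEquiv K) : PairChain K ≃ₗ[ℤ] DSChain K).bijective
  · intro x
    suffices h : (muMap K).comp (Pairbnd K) = (DSbnd K).comp (muMap K) by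
      exact DFunLike.congr_fun h x
    apply Finsupp.lhom_ext'
    intro b
    apply LinearMap.ext_ring
    simp only [LinearMap.comp_apply, Finsupp.lsingle_apply]
    rw [Pairbnd_single, muMap_single, DSbnd_single]
    erw [map_sum]
    apply Finset.sum_congr rfl
    intro i hi
    erw [map_smul, muMap_single]
    congr 2
    apply Subtype.ext
    show ((b.1.2.erase i, b.1.1 \ b.1.2.erase i) : Finset (Fin m) × Finset (Fin m)) = (b.1.2.erase i, insert i (b.1.1 \ b.1.2))
    unfold PairIdx at b
    obtain ⟨⟨ω, σ⟩, hσω, hσ⟩ := b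
    simp only [Prod.mk.injEq, true_and]
    ext a
    simp only [Finset.mem_sdiff, Finset.mem_erase, Finset.mem_insert]
    by_cases hai : a = i
    · subst hai
      simp [hσω hi]
    · simp only [hai, or_false, false_or, not_false_iff, and_true]
      tauto
  · intro p x hx c hc
    rw [muMap_eq] at hc
    have hc' : (idxEquiv K).symm c ∈ x.support := by
      simpa [Finsupp.domLCongr, Finsupp.domCongr, Finsupp.equivMapDomain_apply,
        Finsupp.mem_support_iff] using Finsupp.mem_support_iff.1 hc
    have := hx _ hc'
    have hd : DSdeg c = Pairdeg ((idxEquiv K).symm c) + 1 := by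
      simp [DSdeg, Pairdeg, idxEquiv]
      rfl
    rw [hd, this]
end

section
/- Let K be an abstract simplicial complex on [m] and J = (j_1,…,j_m) an m-tuple of positive integers. Then R*_K(J) is a free ℤ-module with basis the square-free monomials ṽ^σ ũ^τ = x^1 x^2 ⋯ x^m (factors in increasing order of index, with x^i = ṽ^i if i ∈ σ, x^i = ũ^i if i ∈ τ, and x^i omitted otherwise), where σ ranges over simplices of K and τ over subsets of [m] with σ ∩ τ = ∅; that is, every element of R*_K(J) is uniquely a ℤ-linear combination of such monomials. -/
set_option synthInstance.maxHeartbeats 1000000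
set_option maxHeartbeats 1000000

variable {m : ℕ}

/-- the free (noncommutative) `ℤ`-algebra on the generators `ṽ^1,…,ṽ^m,ũ^1,…,ũ^m` -/
abbrev FA (m : ℕ) : Type := FreeAlgebra ℤ (Fin m ⊕ Fin m)

/-- the generator `ṽ^i` (of degree `j_i`) -/
def gV (i : Fin m) : FA m := FreeAlgebra.ι ℤ (Sum.inl i)

/-- the generator `ũ^i` (of degree `j_i - 1`) -/
def gU (i : Fin m) : FA m := FreeAlgebra.ι ℤ (Sum.inr i)

/-- `x^i`, either `ṽ^i` or `ũ^i` -/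
def gen (b : Bool) (i : Fin m) : FA m := if b then gV i else gU i

/-- the degree of `x^i` -/
def gdeg (J : Fin m → ℕ) (b : Bool) (i : Fin m) : ℕ := if b then J i else J i - 1

/-- the defining relations of `R*_K(J)` : graded commutativity for distinct indices,
the square relations, `ũ^iṽ^i = 0`, `ṽ^iũ^i = ṽ^i` if `deg ũ^i = 0` (else `0`),
and the Stanley–Reisner relations `ṽ^τ = 0` for `τ ∉ K`. -/
inductive RrelK (K : ASC m) (J : Fin m → ℕ) : FA m → FA m → Prop
  | comm (b c : Bool) (i j : Fin m) (h : i ≠ j) :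
      RrelK K J (gen b i * gen c j)
        (((-1 : ℤ) ^ (gdeg J b i * gdeg J c j)) • (gen c j * gen b i))
  | sq (b : Bool) (i : Fin m) :
      RrelK K J (gen b i * gen b i) (if gdeg J b i = 0 then gen b i else 0)
  | uv (i : Fin m) : RrelK K J (gU i * gV i) 0
  | vu (i : Fin m) :
      RrelK K J (gV i * gU i) (if J i - 1 = 0 then gV i else 0)
  | sr (τ : Finset (Fin m)) (h : τ ∉ K.faces) :
      RrelK K J (((τ.sort (· ≤ ·)).map gV).prod) 0

/-- `R*_K(J) = R*(J)/I_K(J)`, as the quotient of the free algebra by the relations. -/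
abbrev RKJ (K : ASC m) (J : Fin m → ℕ) : Type := RingQuot (RrelK K J)

/-- index of the square-free monomials `ṽ^σ ũ^τ` with `σ ∈ K`, `σ ∩ τ = ∅`. -/
def MonIdx (K : ASC m) : Type :=
  {p : Finset (Fin m) × Finset (Fin m) // p.1 ∈ K.faces ∧ Disjoint p.1 p.2}

open Classical in
/-- the square-free monomial `ṽ^σ ũ^τ = x^1 x^2 ⋯ x^m` (factors in increasing order
of index) in `R*_K(J)` -/
noncomputable def monom (K : ASC m) (J : Fin m → ℕ) (b : MonIdx K) : RKJ K J :=
  RingQuot.mkAlgHom ℤ (RrelK K J)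
    ((((b.1.1 ∪ b.1.2).sort (· ≤ ·)).map
      (fun i => if i ∈ b.1.1 then gV i else gU i)).prod)

/-! ### Auxiliary: a concrete representation of `R*_K(J)` -/

lemma neg_one_pow_congr' {a b : ℕ} (h : a % 2 = b % 2) : ((-1 : ℤ)) ^ a = (-1) ^ b := by
  conv_lhs => rw [← Nat.div_add_mod a 2]
  conv_rhs => rw [← Nat.div_add_mod b 2]
  rw [pow_add, pow_add, pow_mul, pow_mul]
  norm_num [h]

theorem List.eq_of_perm_of_sorted {α : Type*} {r : α → α → Prop} [Std.Antisymm r]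
    {l₁ l₂ : List α} (hp : l₁.Perm l₂) (h1 : l₁.Pairwise r) (h2 : l₂.Pairwise r) : l₁ = l₂ :=
  hp.eq_of_pairwise' h1 h2

section Model
variable (K : ASC m) (J : Fin m → ℕ)

/-- degree contributed at position `j` by the pair `(σ, τ)` -/
def dAt (σ τ : Finset (Fin m)) (j : Fin m) : ℕ :=
  if j ∈ σ then J j else if j ∈ τ then J j - 1 else 0

/-- sum of degrees at positions `< i` -/
def Ssum (σ τ : Finset (Fin m)) (i : Fin m) : ℕ := ∑ j ∈ Finset.Iio i, dAt J σ τ j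

/-- nonvanishing condition for the action of `x^i` on the monomial of the pair `p` -/
def okP (x : Bool) (i : Fin m) (p : Finset (Fin m) × Finset (Fin m)) : Prop :=
  i ∉ p.1 ∧ (i ∈ p.2 → J i = 1) ∧ (x = true → insert i p.1 ∈ K.faces)

/-- resulting pair of the action of `x^i` -/
def nxt (x : Bool) (i : Fin m) (p : Finset (Fin m) × Finset (Fin m)) :
    Finset (Fin m) × Finset (Fin m) :=
  if x then (insert i p.1, p.2.erase i) else (p.1, insert i p.2)

/-- the sign occurring in the action of `x^i` -/
def sg (x : Bool) (i : Fin m) (p : Finset (Fin m) × Finset (Fin m)) : ℤ :=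
  (-1) ^ (gdeg J x i * Ssum J p.1 p.2 i)

lemma dAt_nxt_ne {x : Bool} {i j : Fin m} (p : Finset (Fin m) × Finset (Fin m)) (hij : j ≠ i) :
    dAt J (nxt x i p).1 (nxt x i p).2 j = dAt J p.1 p.2 j := by
  cases x <;> simp [nxt, dAt, Finset.mem_insert, Finset.mem_erase, hij]

lemma dAt_self_of_ok {x : Bool} {i : Fin m} {p} (h : okP K J x i p) :
    dAt J p.1 p.2 i = 0 := by
  obtain ⟨h1, h2, -⟩ := h
  by_cases hτ : i ∈ p.2 <;> simp [dAt, h1, hτ]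
  · simp [h2 hτ]

lemma dAt_nxt_self {x : Bool} {i : Fin m} {p} (h : okP K J x i p) :
    dAt J (nxt x i p).1 (nxt x i p).2 i = gdeg J x i := by
  cases x <;> simp [nxt, dAt, gdeg, h.1]

lemma Ssum_nxt {x : Bool} {i : Fin m} {p} (h : okP K J x i p) (j : Fin m) :
    Ssum J (nxt x i p).1 (nxt x i p).2 j
      = Ssum J p.1 p.2 j + (if i < j then gdeg J x i else 0) := by
  have key : ∀ j' ∈ Finset.Iio j, dAt J (nxt x i p).1 (nxt x i p).2 j'
      = dAt J p.1 p.2 j' + (if j' = i then gdeg J x i else 0) := by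
    intro j' _
    by_cases hji : j' = i
    · subst hji
      rw [dAt_nxt_self K J h, dAt_self_of_ok K J h]
      simp
    · rw [dAt_nxt_ne J p hji]
      simp [hji]
  rw [Ssum, Finset.sum_congr rfl key, Finset.sum_add_distrib, ← Ssum,
    Finset.sum_ite_eq' (Finset.Iio j) i (fun _ => gdeg J x i)]
  simp only [Finset.mem_Iio]

lemma nxt_comm {x y : Bool} {i j : Fin m} (hij : i ≠ j) (p) :
    nxt x i (nxt y j p) = nxt y j (nxt x i p) := by
  cases x <;> cases y <;>
    simp only [nxt, if_true, if_false, Bool.false_eq_true] <;>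
    refine Prod.ext ?_ ?_ <;> simp only []
  · exact Finset.insert_comm _ _ _
  · exact (Finset.erase_insert_of_ne hij).symm
  · exact Finset.erase_insert_of_ne hij.symm
  · exact Finset.insert_comm _ _ _
  · exact Finset.erase_right_comm

lemma okP_swap {x y : Bool} {i j : Fin m} (hij : i ≠ j) {p}
    (hx : okP K J x i p) (hy : okP K J y j (nxt x i p)) :
    okP K J y j p ∧ okP K J x i (nxt y j p) := by
  obtain ⟨h1, h2, h3⟩ := hx
  obtain ⟨g1, g2, g3⟩ := hy
  cases x
  · simp only [nxt, Bool.false_eq_true, if_false] at g1 g2 g3 ⊢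
    refine ⟨⟨g1, fun hj => g2 (Finset.mem_insert_of_mem hj), g3⟩, ?_⟩
    cases y
    · simp only [nxt, Bool.false_eq_true, if_false]
      exact ⟨h1, fun hi => h2 (Finset.mem_of_mem_insert_of_ne hi hij),
        fun hh => by cases hh⟩
    · simp only [nxt, if_true]
      exact ⟨fun hi => h1 (Finset.mem_of_mem_insert_of_ne hi hij),
        fun hi => h2 (Finset.mem_of_mem_erase hi), fun hh => by cases hh⟩
  · simp only [nxt, if_true] at g1 g2 g3
    refine ⟨⟨fun hj => g1 (Finset.mem_insert_of_mem hj),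
      fun hj => g2 (Finset.mem_erase.2 ⟨hij.symm, hj⟩),
      fun hy' => K.down_closed (g3 hy') (by
        intro a ha
        rcases Finset.mem_insert.1 ha with h | h
        · exact Finset.mem_insert.2 (Or.inl h)
        · exact Finset.mem_insert_of_mem (Finset.mem_insert_of_mem h))⟩, ?_⟩
    cases y
    · simp only [nxt, Bool.false_eq_true, if_false]
      exact ⟨h1, fun hi => h2 (Finset.mem_of_mem_insert_of_ne hi hij), fun _ => h3 rfl⟩
    · simp only [nxt, if_true]
      exact ⟨fun hi => h1 (Finset.mem_of_mem_insert_of_ne hi hij),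
        fun hi => h2 (Finset.mem_of_mem_erase hi), fun _ => by
        have := g3 rfl
        rwa [Finset.insert_comm] at this⟩

lemma nxt_mem {x : Bool} {i : Fin m} {p : Finset (Fin m) × Finset (Fin m)}
    (hp : p.1 ∈ K.faces ∧ Disjoint p.1 p.2) (h : okP K J x i p) :
    (nxt x i p).1 ∈ K.faces ∧ Disjoint (nxt x i p).1 (nxt x i p).2 := by
  obtain ⟨h1, -, h3⟩ := h
  cases x with
  | true =>
    simp only [nxt, if_true]
    exact ⟨h3 rfl, Finset.disjoint_insert_left.2 ⟨Finset.notMem_erase _ _,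
      Finset.disjoint_of_subset_right (Finset.erase_subset _ _) hp.2⟩⟩
  | false =>
    simp only [nxt, if_false, Bool.false_eq_true]
    exact ⟨hp.1, Finset.disjoint_insert_right.2 ⟨h1, hp.2⟩⟩

/-- resulting basis index of the action of `x^i` -/
def nxtIdx {x : Bool} {i : Fin m} (b : MonIdx K) (h : okP K J x i b.1) : MonIdx K :=
  ⟨nxt x i b.1, nxt_mem K J b.2 h⟩

open Classical in
/-- action of `x^i` on basis monomials -/
noncomputable def actP (x : Bool) (i : Fin m) (b : MonIdx K) : MonIdx K →₀ ℤ :=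
  if h : okP K J x i b.1 then sg J x i b.1 • Finsupp.single (nxtIdx K J b h) 1 else 0

/-- action of `x^i` as a linear endomorphism -/
noncomputable def op (x : Bool) (i : Fin m) : Module.End ℤ (MonIdx K →₀ ℤ) :=
  Finsupp.lsum ℤ fun b => LinearMap.toSpanSingleton ℤ _ (actP K J x i b)

lemma op_single (x : Bool) (i : Fin m) (b : MonIdx K) :
    op K J x i (Finsupp.single b 1) = actP K J x i b := by
  simp [op, LinearMap.toSpanSingleton]

open Classical in
lemma actP_of_ok {x : Bool} {i : Fin m} {b : MonIdx K} (h : okP K J x i b.1) :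
    actP K J x i b = sg J x i b.1 • Finsupp.single (nxtIdx K J b h) 1 := dif_pos h

open Classical in
lemma actP_of_not {x : Bool} {i : Fin m} {b : MonIdx K} (h : ¬ okP K J x i b.1) :
    actP K J x i b = 0 := dif_neg h

lemma endo_ext {φ ψ : Module.End ℤ (MonIdx K →₀ ℤ)}
    (h : ∀ b, φ (Finsupp.single b 1) = ψ (Finsupp.single b 1)) : φ = ψ := by
  apply Finsupp.lhom_ext
  intro a z
  have hz : (Finsupp.single a z : MonIdx K →₀ ℤ) = z • Finsupp.single a 1 := by
    rw [Finsupp.smul_single, smul_eq_mul, mul_one]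
  rw [hz, map_smul, map_smul, h]

/-- the representation of the free algebra -/
noncomputable def Phi : FA m →ₐ[ℤ] Module.End ℤ (MonIdx K →₀ ℤ) :=
  FreeAlgebra.lift ℤ (Sum.elim (op K J true) (op K J false))

lemma Phi_gen (x : Bool) (i : Fin m) : Phi K J (gen x i) = op K J x i := by
  cases x <;> simp [gen, Phi, gV, gU, FreeAlgebra.lift_ι_apply]

lemma Phi_gV (i : Fin m) : Phi K J (gV i) = op K J true i := Phi_gen K J true i

lemma Phi_gU (i : Fin m) : Phi K J (gU i) = op K J false i := Phi_gen K J false i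

end Model

section Rel
variable (K : ASC m) (J : Fin m → ℕ)

lemma sign_calc₁ (a b Si Sj : ℕ) :
    ((-1 : ℤ)) ^ (b * Sj) * (-1) ^ (a * (Si + b))
      = (-1) ^ (a * b) * (-1) ^ (a * Si) * (-1) ^ (b * Sj) := by
  rw [Nat.mul_add, pow_add]
  ring

lemma sign_calc₂ (a b Si Sj : ℕ) :
    ((-1 : ℤ)) ^ (b * Sj) * (-1) ^ (a * Si)
      = (-1) ^ (a * b) * (-1) ^ (a * Si) * (-1) ^ (b * (Sj + a)) := by
  have h1 : ((-1 : ℤ)) ^ (a * b) * (-1) ^ (a * b) = 1 := by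
    rw [← pow_add]
    exact Even.neg_one_pow ⟨a * b, rfl⟩
  rw [Nat.mul_add, pow_add, mul_comm b a]
  linear_combination (-((-1 : ℤ) ^ (a * Si) * (-1) ^ (b * Sj))) * h1

lemma rel_preserved (hJ : ∀ i, 1 ≤ J i) :
    ∀ ⦃a b : FA m⦄, RrelK K J a b → Phi K J a = Phi K J b := by
  intro a b r
  induction r with
  | comm x y i j hij =>
    rw [map_mul, map_smul, map_mul, Phi_gen, Phi_gen]
    apply endo_ext
    intro b
    rw [Module.End.mul_apply, LinearMap.smul_apply, Module.End.mul_apply,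
      op_single, op_single]
    by_cases hj : okP K J y j b.1
    · rw [actP_of_ok K J hj, map_smul, op_single]
      by_cases hi2 : okP K J x i (nxt y j b.1)
      · have hi2' : okP K J x i (nxtIdx K J b hj).1 := hi2
        obtain ⟨hi, hj2⟩ := okP_swap K J hij.symm hj hi2
        have hj2' : okP K J y j (nxtIdx K J b hi).1 := hj2
        rw [actP_of_ok K J hi2', actP_of_ok K J hi, map_smul, op_single,
          actP_of_ok K J hj2']
        have hidx : nxtIdx K J (nxtIdx K J b hj) hi2' = nxtIdx K J (nxtIdx K J b hi) hj2' :=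
          Subtype.ext (nxt_comm hij b.1)
        rw [hidx, smul_smul, smul_smul, smul_smul]
        congr 1
        show sg J y j b.1 * sg J x i (nxt y j b.1)
          = (-1) ^ (gdeg J x i * gdeg J y j) * sg J x i b.1 * sg J y j (nxt x i b.1)
        simp only [sg]
        rw [Ssum_nxt K J hj i, Ssum_nxt K J hi j]
        rcases lt_or_gt_of_ne hij with h | h
        · rw [if_pos h, if_neg (not_lt.2 h.le), Nat.add_zero]
          exact sign_calc₂ (gdeg J x i) (gdeg J y j) _ _
        · rw [if_neg (not_lt.2 h.le), if_pos h, Nat.add_zero]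
          exact sign_calc₁ (gdeg J x i) (gdeg J y j) _ _
      · rw [actP_of_not K J hi2, smul_zero]
        by_cases hi : okP K J x i b.1
        · have hj2 : ¬ okP K J y j (nxt x i b.1) := by
            intro hcon
            exact hi2 (okP_swap K J hij hi hcon).2
          rw [actP_of_ok K J hi, map_smul, op_single, actP_of_not K J hj2,
            smul_zero, smul_zero]
        · rw [actP_of_not K J hi, map_zero, smul_zero]
    · rw [actP_of_not K J hj, map_zero]
      by_cases hi : okP K J x i b.1
      · have hj2 : ¬ okP K J y j (nxt x i b.1) := by
          intro hcon
          exact hj (okP_swap K J hij hi hcon).1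
        rw [actP_of_ok K J hi, map_smul, op_single, actP_of_not K J hj2,
          smul_zero, smul_zero]
      · rw [actP_of_not K J hi, map_zero, smul_zero]
  | sq x i =>
    rw [map_mul, Phi_gen]
    apply endo_ext
    intro b
    rw [Module.End.mul_apply, op_single]
    cases x with
    | true =>
      have hd : ¬ (gdeg J true i = 0) := by
        have := hJ i
        simp only [gdeg, if_true]
        omega
      rw [if_neg hd, map_zero, LinearMap.zero_apply]
      by_cases h : okP K J true i b.1
      · rw [actP_of_ok K J h, map_smul, op_single, actP_of_not, smul_zero]
        intro hcon
        exact hcon.1 (by simp [nxtIdx, nxt])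
      · rw [actP_of_not K J h, map_zero]
    | false =>
      by_cases hd : gdeg J false i = 0
      · rw [if_pos hd, Phi_gen, op_single]
        have hJi : J i = 1 := by
          have := hJ i
          simp only [gdeg, if_false, Bool.false_eq_true] at hd
          omega
        by_cases h : okP K J false i b.1
        · have h2 : okP K J false i (nxtIdx K J b h).1 := by
            refine ⟨h.1, fun _ => hJi, fun hh => by cases hh⟩
          rw [actP_of_ok K J h, map_smul, op_single, actP_of_ok K J h2]
          have hidx : nxtIdx K J (nxtIdx K J b h) h2 = nxtIdx K J b h := by
            apply Subtype.ext
            show nxt false i (nxt false i b.1) = nxt false i b.1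
            simp [nxt]
          rw [hidx, smul_smul]
          congr 1
          have : sg J false i (nxtIdx K J b h).1 = 1 := by
            simp [sg, hd]
          rw [this, mul_one]
        · rw [actP_of_not K J h, map_zero]
      · rw [if_neg hd, map_zero, LinearMap.zero_apply]
        have hJi : J i ≠ 1 := by
          simp only [gdeg, if_false, Bool.false_eq_true] at hd
          omega
        by_cases h : okP K J false i b.1
        · rw [actP_of_ok K J h, map_smul, op_single, actP_of_not, smul_zero]
          intro hcon
          have : i ∈ (nxtIdx K J b h).1.2 := by simp [nxtIdx, nxt]
          exact hJi (hcon.2.1 this)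
        · rw [actP_of_not K J h, map_zero]
  | uv i =>
    rw [map_mul, map_zero, Phi_gU, Phi_gV]
    apply endo_ext
    intro b
    rw [Module.End.mul_apply, op_single, LinearMap.zero_apply]
    by_cases h : okP K J true i b.1
    · rw [actP_of_ok K J h, map_smul, op_single, actP_of_not, smul_zero]
      intro hcon
      exact hcon.1 (by simp [nxtIdx, nxt])
    · rw [actP_of_not K J h, map_zero]
  | vu i =>
    rw [map_mul, Phi_gV, Phi_gU]
    apply endo_ext
    intro b
    rw [Module.End.mul_apply, op_single]
    by_cases hd : J i - 1 = 0
    · have hJi : J i = 1 := by have := hJ i; omega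
      rw [if_pos hd, Phi_gV, op_single]
      by_cases h : okP K J false i b.1
      · rw [actP_of_ok K J h, map_smul, op_single]
        by_cases hK : insert i b.1.1 ∈ K.faces
        · have h2 : okP K J true i (nxtIdx K J b h).1 :=
            ⟨h.1, fun _ => hJi, fun _ => hK⟩
          have h3 : okP K J true i b.1 := ⟨h.1, fun _ => hJi, fun _ => hK⟩
          rw [actP_of_ok K J h2, actP_of_ok K J h3, smul_smul]
          have hidx : nxtIdx K J (nxtIdx K J b h) h2 = nxtIdx K J b h3 := by
            apply Subtype.ext
            show nxt true i (nxt false i b.1) = nxt true i b.1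
            simp only [nxt, if_true, if_false, Bool.false_eq_true]
            exact Prod.ext rfl (Finset.erase_insert_eq_erase _ _)
          rw [hidx]
          congr 1
          show sg J false i b.1 * sg J true i (nxt false i b.1) = sg J true i b.1
          simp only [sg, gdeg, if_true, if_false, Bool.false_eq_true, hd, Nat.zero_mul,
            pow_zero, one_mul]
          congr 2
          show Ssum J b.1.1 (insert i b.1.2) i = Ssum J b.1.1 b.1.2 i
          apply Finset.sum_congr rfl
          intro j hj
          have hji : j ≠ i := by
            intro hcon
            rw [hcon] at hj
            exact absurd (Finset.mem_Iio.1 hj) (lt_irrefl i)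
          simp [dAt, Finset.mem_insert, hji]
        · have h2 : ¬ okP K J true i (nxtIdx K J b h).1 := by
            intro hcon
            exact hK (hcon.2.2 rfl)
          have h3 : ¬ okP K J true i b.1 := by
            intro hcon
            exact hK (hcon.2.2 rfl)
          rw [actP_of_not K J h2, actP_of_not K J h3, smul_zero]
      · rw [actP_of_not K J h, map_zero, actP_of_not]
        intro hcon
        have hiσ : i ∈ b.1.1 := by
          by_contra hiσ
          exact h ⟨hiσ, fun _ => hJi, fun hh => by cases hh⟩
        exact hcon.1 hiσ
    · rw [if_neg hd, map_zero, LinearMap.zero_apply]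
      by_cases h : okP K J false i b.1
      · rw [actP_of_ok K J h, map_smul, op_single, actP_of_not, smul_zero]
        intro hcon
        have : i ∈ (nxtIdx K J b h).1.2 := by simp [nxtIdx, nxt]
        have := hcon.2.1 this
        omega
      · rw [actP_of_not K J h, map_zero]
  | sr τ hτ =>
    rw [map_zero]
    apply endo_ext
    intro b
    rw [LinearMap.zero_apply]
    -- key claim about products of v-operators
    have key : ∀ (l : List (Fin m)) (b : MonIdx K),
        Phi K J ((l.map gV).prod) (Finsupp.single b 1) = 0 ∨
        ∃ (c : ℤ) (b' : MonIdx K), (∀ i ∈ l, i ∈ b'.1.1) ∧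
          Phi K J ((l.map gV).prod) (Finsupp.single b 1) = c • Finsupp.single b' 1 := by
      intro l
      induction l with
      | nil =>
        intro b
        right
        exact ⟨1, b, by simp, by simp⟩
      | cons i l ih =>
        intro b
        rw [List.map_cons, List.prod_cons, map_mul, Module.End.mul_apply]
        rcases ih b with h0 | ⟨c, b', hmem, heq⟩
        · left
          rw [h0, map_zero]
        · rw [heq, map_smul, Phi_gV, op_single]
          by_cases h : okP K J true i b'.1
          · right
            refine ⟨c * sg J true i b'.1, nxtIdx K J b' h, ?_, ?_⟩
            · intro k hk
              rcases List.mem_cons.1 hk with hk | hk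
              · subst hk
                simp [nxtIdx, nxt]
              · have := hmem k hk
                simp only [nxtIdx, nxt, if_true]
                exact Finset.mem_insert_of_mem this
            · rw [actP_of_ok K J h, smul_smul]
          · left
            rw [actP_of_not K J h, smul_zero]
    rcases key (τ.sort (· ≤ ·)) b with h0 | ⟨c, b', hmem, heq⟩
    · exact h0
    · exfalso
      apply hτ
      apply K.down_closed b'.2.1
      intro k hk
      exact hmem k ((Finset.mem_sort _).2 hk)

section Indep
variable (K : ASC m) (J : Fin m → ℕ)

/-- the representation of `R*_K(J)` -/
noncomputable def psi (hJ : ∀ i, 1 ≤ J i) :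
    RKJ K J →ₐ[ℤ] Module.End ℤ (MonIdx K →₀ ℤ) :=
  RingQuot.liftAlgHom ℤ ⟨Phi K J, rel_preserved K J hJ⟩

lemma psi_mk (hJ : ∀ i, 1 ≤ J i) (x : FA m) :
    psi K J hJ (RingQuot.mkAlgHom ℤ (RrelK K J) x) = Phi K J x :=
  RingQuot.liftAlgHom_mkAlgHom_apply ℤ (Phi K J) (rel_preserved K J hJ) x

/-- the empty monomial index -/
def emptyIdx : MonIdx K := ⟨(∅, ∅), K.empty_mem, by simp⟩

lemma build : ∀ (l : List (Fin m)), l.Pairwise (· < ·) →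
    ∀ (σ τ : Finset (Fin m)) (hK : σ ∈ K.faces) (hd : Disjoint σ τ),
    σ ∪ τ = l.toFinset →
    Phi K J ((l.map (fun i => if i ∈ σ then gV i else gU i)).prod)
        (Finsupp.single (emptyIdx K) 1)
      = Finsupp.single (⟨(σ, τ), hK, hd⟩ : MonIdx K) 1 := by
  intro l
  induction l with
  | nil =>
    intro _ σ τ hK hd hu
    simp only [List.toFinset_nil] at hu
    obtain ⟨h1, h2⟩ := Finset.union_eq_empty.1 hu
    subst h1; subst h2
    simp only [List.map_nil, List.prod_nil, map_one, Module.End.one_apply]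
    rfl
  | cons i l ih =>
    intro hsort σ τ hK hd hu
    obtain ⟨hlt, hsort'⟩ := List.pairwise_cons.1 hsort
    have hil : i ∉ l := fun hcon => absurd (hlt i hcon) (lt_irrefl i)
    have hilf : i ∉ l.toFinset := fun hcon => hil (List.mem_toFinset.1 hcon)
    set σ' := σ.erase i with hσ'
    set τ' := τ.erase i with hτ'
    have hK' : σ' ∈ K.faces := K.down_closed hK (Finset.erase_subset _ _)
    have hd' : Disjoint σ' τ' :=
      Finset.disjoint_of_subset_left (Finset.erase_subset _ _)
        (Finset.disjoint_of_subset_right (Finset.erase_subset _ _) hd)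
    have hu' : σ' ∪ τ' = l.toFinset := by
      rw [hσ', hτ', ← Finset.erase_union_distrib, hu, List.toFinset_cons,
        Finset.erase_insert_eq_erase, Finset.erase_eq_of_notMem hilf]
    have hiστ : i ∈ σ ∪ τ := by
      rw [hu, List.toFinset_cons]
      exact Finset.mem_insert_self _ _
    have hmap : l.map (fun j => if j ∈ σ then gV j else gU j)
        = l.map (fun j => if j ∈ σ' then gV j else gU j) := by
      apply List.map_congr_left
      intro j hj
      have hji : j ≠ i := fun hcon => hil (hcon ▸ hj)
      by_cases hjσ : j ∈ σ
      · rw [if_pos hjσ, if_pos (Finset.mem_erase.2 ⟨hji, hjσ⟩)]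
      · rw [if_neg hjσ, if_neg (fun hcon => hjσ (Finset.mem_of_mem_erase hcon))]
    have hz : ∀ j, j ∈ Finset.Iio i → dAt J σ' τ' j = 0 := by
      intro j hj
      have hji : j ∉ σ' ∪ τ' := by
        rw [hu', List.mem_toFinset]
        intro hcon
        exact absurd (lt_trans (Finset.mem_Iio.1 hj) (hlt j hcon)) (lt_irrefl j)
      rw [Finset.mem_union] at hji
      push_neg at hji
      simp [dAt, hji.1, hji.2]
    have hSsum : Ssum J σ' τ' i = 0 := Finset.sum_eq_zero hz
    rw [List.map_cons, List.prod_cons, map_mul, Module.End.mul_apply, hmap,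
      ih hsort' σ' τ' hK' hd' hu']
    by_cases hiσ : i ∈ σ
    · rw [if_pos hiσ, Phi_gV]
      erw [op_single]
      have hok : okP K J true i (σ', τ') :=
        ⟨Finset.notMem_erase _ _, fun hcon => absurd hcon (Finset.notMem_erase _ _),
         fun _ => by rwa [Finset.insert_erase hiσ]⟩
      erw [actP_of_ok K J (b := (⟨(σ', τ'), hK', hd'⟩ : MonIdx K)) hok]
      have hsg : sg J true i ((⟨(σ', τ'), hK', hd'⟩ : MonIdx K)).1 = 1 := by
        simp [sg, hSsum]
      rw [hsg, one_smul]
      congr 1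
      apply Subtype.ext
      show nxt true i (σ', τ') = (σ, τ)
      have hiτ : i ∉ τ := Finset.disjoint_left.1 hd hiσ
      simp only [nxt, if_true]
      refine Prod.ext (Finset.insert_erase hiσ) ?_
      show τ'.erase i = τ
      rw [hτ', Finset.erase_idem, Finset.erase_eq_of_notMem hiτ]
    · rw [if_neg hiσ, Phi_gU]
      erw [op_single]
      have hiτ : i ∈ τ := by
        rcases Finset.mem_union.1 hiστ with h | h
        · exact absurd h hiσ
        · exact h
      have hok : okP K J false i (σ', τ') :=
        ⟨Finset.notMem_erase _ _, fun hcon => absurd hcon (Finset.notMem_erase _ _),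
         fun hcon => by cases hcon⟩
      erw [actP_of_ok K J (b := (⟨(σ', τ'), hK', hd'⟩ : MonIdx K)) hok]
      have hsg : sg J false i ((⟨(σ', τ'), hK', hd'⟩ : MonIdx K)).1 = 1 := by
        simp [sg, hSsum]
      rw [hsg, one_smul]
      congr 1
      apply Subtype.ext
      show nxt false i (σ', τ') = (σ, τ)
      simp only [nxt, if_false, Bool.false_eq_true]
      refine Prod.ext ?_ ?_
      · show σ' = σ
        rw [hσ', Finset.erase_eq_of_notMem hiσ]
      · show insert i τ' = τ
        rw [hτ', Finset.insert_erase hiτ]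

lemma psi_monom (hJ : ∀ i, 1 ≤ J i) (b : MonIdx K) :
    psi K J hJ (monom K J b) (Finsupp.single (emptyIdx K) 1) = Finsupp.single b 1 := by
  rw [monom, psi_mk]
  have := build K J ((b.1.1 ∪ b.1.2).sort (· ≤ ·)) ((Finset.sortedLT_sort _).pairwise)
    b.1.1 b.1.2 b.2.1 b.2.2 (Finset.sort_toFinset _ _).symm
  rw [this]
  congr 1

lemma monom_linearIndependent (hJ : ∀ i, 1 ≤ J i) :
    LinearIndependent ℤ (monom K J) := by
  -- evaluation at the empty monomial, as a linear map
  let L : RKJ K J →ₗ[ℤ] (MonIdx K →₀ ℤ) :=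
    { toFun := fun r => psi K J hJ r (Finsupp.single (emptyIdx K) 1)
      map_add' := fun x y => by simp [map_add]
      map_smul' := fun c x => by simp [map_smul] }
  apply LinearIndependent.of_comp L
  have hcomp : (⇑L ∘ monom K J) = fun b => Finsupp.single b (1 : ℤ) := by
    funext b
    exact psi_monom K J hJ b
  rw [hcomp, ← Finsupp.coe_basisSingleOne]
  exact (Finsupp.basisSingleOne : Module.Basis (MonIdx K) ℤ _).linearIndependent

end Indep

section Span
variable (K : ASC m) (J : Fin m → ℕ)

/-- the quotient map -/
noncomputable def mkQ : FA m →ₐ[ℤ] RKJ K J := RingQuot.mkAlgHom ℤ (RrelK K J)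

/-- the word `x^{i_1} ⋯ x^{i_r}` over a list of indices, with `x^i = ṽ^i` for `i ∈ σ`
and `x^i = ũ^i` otherwise -/
def wrd (σ : Finset (Fin m)) (l : List (Fin m)) : FA m :=
  (l.map (fun i => if i ∈ σ then gV i else gU i)).prod

lemma gen_true (i : Fin m) : gen true i = gV i := rfl
lemma gen_false (i : Fin m) : gen false i = gU i := rfl

lemma wrd_cons (σ : Finset (Fin m)) (a : Fin m) (l : List (Fin m)) :
    wrd σ (a :: l) = (if a ∈ σ then gV a else gU a) * wrd σ l := by
  simp [wrd]

lemma wrd_append (σ : Finset (Fin m)) (l₁ l₂ : List (Fin m)) :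
    wrd σ (l₁ ++ l₂) = wrd σ l₁ * wrd σ l₂ := by
  simp [wrd]

lemma wrd_congr {σ σ' : Finset (Fin m)} (l : List (Fin m))
    (h : ∀ j ∈ l, j ∈ σ ↔ j ∈ σ') : wrd σ l = wrd σ' l := by
  unfold wrd
  congr 1
  apply List.map_congr_left
  intro j hj
  by_cases hjσ : j ∈ σ
  · rw [if_pos hjσ, if_pos ((h j hj).1 hjσ)]
  · rw [if_neg hjσ, if_neg (fun hc => hjσ ((h j hj).2 hc))]

/-- total degree of a word -/
def wdeg (σ : Finset (Fin m)) (l : List (Fin m)) : ℕ :=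
  (l.map (fun j => if j ∈ σ then J j else J j - 1)).sum

lemma mkQ_rel {x y : FA m} (h : RrelK K J x y) : mkQ K J x = mkQ K J y :=
  RingQuot.mkAlgHom_rel ℤ h

lemma comm_past (c : Bool) (i : Fin m) (σ : Finset (Fin m)) :
    ∀ (l : List (Fin m)), i ∉ l →
      mkQ K J (gen c i * wrd σ l)
        = ((-1 : ℤ) ^ (gdeg J c i * wdeg J σ l)) • mkQ K J (wrd σ l * gen c i) := by
  intro l
  induction l with
  | nil =>
    intro _
    simp [wrd, wdeg]
  | cons a l ih =>
    intro hil
    have hia : i ≠ a := fun h => hil (h ▸ (List.mem_cons_self : a ∈ a :: l))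
    have hil' : i ∉ l := fun h => hil (List.mem_cons_of_mem a h)
    obtain ⟨ca, hca1, hca2⟩ : ∃ ca : Bool, (if a ∈ σ then gV a else gU a) = gen ca a ∧
        (if a ∈ σ then J a else J a - 1) = gdeg J ca a := by
      by_cases haσ : a ∈ σ
      · exact ⟨true, by rw [if_pos haσ, gen_true], by rw [if_pos haσ]; rfl⟩
      · exact ⟨false, by rw [if_neg haσ, gen_false], by rw [if_neg haσ]; rfl⟩
    have hstep : mkQ K J (gen c i * gen ca a)
        = ((-1 : ℤ) ^ (gdeg J c i * gdeg J ca a)) • mkQ K J (gen ca a * gen c i) := by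
      rw [mkQ_rel K J (RrelK.comm c ca i a hia), map_smul]
    have hwdeg : wdeg J σ (a :: l) = gdeg J ca a + wdeg J σ l := by
      simp [wdeg, hca2]
    calc mkQ K J (gen c i * wrd σ (a :: l))
        = mkQ K J (gen c i * gen ca a) * mkQ K J (wrd σ l) := by
          rw [wrd_cons, hca1, ← mul_assoc, map_mul]
      _ = ((-1 : ℤ) ^ (gdeg J c i * gdeg J ca a)) •
            (mkQ K J (gen ca a) * mkQ K J (gen c i * wrd σ l)) := by
          rw [hstep, smul_mul_assoc, map_mul, mul_assoc, ← map_mul]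
      _ = ((-1 : ℤ) ^ (gdeg J c i * gdeg J ca a) * (-1) ^ (gdeg J c i * wdeg J σ l)) •
            (mkQ K J (gen ca a) * mkQ K J (wrd σ l * gen c i)) := by
          rw [ih hil', mul_smul_comm, smul_smul]
      _ = ((-1 : ℤ) ^ (gdeg J c i * wdeg J σ (a :: l))) • mkQ K J (wrd σ (a :: l) * gen c i) := by
          rw [hwdeg, Nat.mul_add, pow_add, wrd_cons, hca1, ← map_mul, ← mul_assoc,
            mul_assoc (gen ca a)]

lemma wrd_all_v (σ : Finset (Fin m)) (l : List (Fin m)) (h : ∀ j ∈ l, j ∈ σ) :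
    wrd σ l = (l.map gV).prod := by
  unfold wrd
  congr 1
  apply List.map_congr_left
  intro j hj
  rw [if_pos (h j hj)]

lemma sep : ∀ (l : List (Fin m)), l.Nodup → ∀ (σ : Finset (Fin m)), ∃ k : ℕ,
    mkQ K J (wrd σ l) = ((-1 : ℤ) ^ k) •
      mkQ K J ((((l.filter (fun j => decide (j ∈ σ))).map gV).prod) *
        (((l.filter (fun j => !decide (j ∈ σ))).map gU).prod)) := by
  intro l
  induction l with
  | nil =>
    intro _ σ
    exact ⟨0, by simp [wrd]⟩
  | cons a l ih =>
    intro hnd σ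
    have ha : a ∉ l := (List.nodup_cons.1 hnd).1
    obtain ⟨k, hk⟩ := ih (List.nodup_cons.1 hnd).2 σ
    by_cases haσ : a ∈ σ
    · refine ⟨k, ?_⟩
      rw [List.filter_cons_of_pos (by simp [haσ]), List.filter_cons_of_neg (by simp [haσ]),
        wrd_cons, if_pos haσ, map_mul, hk, mul_smul_comm]
      congr 1
      rw [List.map_cons, List.prod_cons, mul_assoc, ← map_mul]
    · -- move `gU a` past the `v`-part
      set lv := l.filter (fun j => decide (j ∈ σ)) with hlv
      have halv : a ∉ lv := fun hc => ha (List.mem_of_mem_filter hc)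
      have hall : ∀ j ∈ lv, j ∈ σ := by
        intro j hj
        have := (List.mem_filter.1 hj).2
        simpa using this
      have hcp := comm_past K J false a σ lv halv
      rw [wrd_all_v σ lv hall, gen_false] at hcp
      set Ul := ((l.filter (fun j => !decide (j ∈ σ))).map gU).prod with hUl
      refine ⟨k + gdeg J false a * wdeg J σ lv, ?_⟩
      rw [List.filter_cons_of_neg (by simp [haσ]), List.filter_cons_of_pos (by simp [haσ]),
        List.map_cons, List.prod_cons]
      calc mkQ K J (wrd σ (a :: l))
          = mkQ K J (gU a) * mkQ K J (wrd σ l) := by rw [wrd_cons, if_neg haσ, map_mul]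
        _ = ((-1 : ℤ) ^ k) • (mkQ K J (gU a * ((lv.map gV).prod * Ul))) := by
            rw [hk, mul_smul_comm, ← map_mul]
        _ = ((-1 : ℤ) ^ k) • (mkQ K J (gU a * (lv.map gV).prod) * mkQ K J Ul) := by
            rw [← mul_assoc, map_mul]
        _ = ((-1 : ℤ) ^ (k + gdeg J false a * wdeg J σ lv)) •
              (mkQ K J ((lv.map gV).prod * gU a) * mkQ K J Ul) := by
            rw [hcp, smul_mul_assoc, smul_smul, ← pow_add]
        _ = _ := by rw [← map_mul, mul_assoc]

lemma mkQ_sr (σ : Finset (Fin m)) (hσ : σ ∉ K.faces) :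
    mkQ K J (((σ.sort (· ≤ ·)).map gV).prod) = 0 := by
  have := mkQ_rel K J (RrelK.sr σ hσ)
  rw [map_zero] at this
  exact this

lemma mkQ_wrd_not_face (σ τ : Finset (Fin m)) (hσ : σ ∉ K.faces) :
    mkQ K J (wrd σ ((σ ∪ τ).sort (· ≤ ·))) = 0 := by
  obtain ⟨k, hk⟩ := sep K J ((σ ∪ τ).sort (· ≤ ·)) (Finset.sort_nodup _ _) σ
  have hfil : (((σ ∪ τ).sort (· ≤ ·)).filter (fun j => decide (j ∈ σ))) = σ.sort (· ≤ ·) := by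
    refine List.eq_of_perm_of_sorted
      ((List.perm_ext_iff_of_nodup
        (List.Nodup.filter _ (Finset.sort_nodup _ _)) (Finset.sort_nodup _ _)).2 ?_)
      (List.Pairwise.filter _ (Finset.pairwise_sort _ _)) (Finset.pairwise_sort _ _)
    intro a
    simp only [List.mem_filter, Finset.mem_sort, Finset.mem_union, decide_eq_true_eq]
    tauto
  rw [hk, hfil, map_mul, mkQ_sr K J σ hσ, zero_mul]
  exact smul_zero _

lemma monom_eq (b : MonIdx K) :
    monom K J b = mkQ K J (wrd b.1.1 ((b.1.1 ∪ b.1.2).sort (· ≤ ·))) := rfl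

lemma mkQ_wrd_mem (σ τ : Finset (Fin m)) (hd : Disjoint σ τ) :
    mkQ K J (wrd σ ((σ ∪ τ).sort (· ≤ ·))) ∈ Submodule.span ℤ (Set.range (monom K J)) := by
  by_cases hσ : σ ∈ K.faces
  · exact Submodule.subset_span ⟨⟨(σ, τ), hσ, hd⟩, rfl⟩
  · rw [mkQ_wrd_not_face K J σ τ hσ]
    exact zero_mem _

end Span

section Reduce
variable (K : ASC m) (J : Fin m → ℕ)

lemma sort_split (s : Finset (Fin m)) (i : Fin m) :
    s.sort (· ≤ ·) = (s.sort (· ≤ ·)).filter (fun j => decide (j < i))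
      ++ (s.sort (· ≤ ·)).filter (fun j => !decide (j < i)) := by
  refine (List.eq_of_perm_of_sorted (List.filter_append_perm _ _) ?_
    (Finset.pairwise_sort _ _)).symm
  refine List.pairwise_append.2 ⟨List.Pairwise.filter _ (Finset.pairwise_sort _ _),
    List.Pairwise.filter _ (Finset.pairwise_sort _ _), ?_⟩
  intro a ha b hb
  have ha' := (List.mem_filter.1 ha).2
  have hb' := (List.mem_filter.1 hb).2
  simp only [decide_eq_true_eq] at ha'
  simp only [Bool.not_eq_true', decide_eq_false_iff_not] at hb'
  exact le_of_lt (lt_of_lt_of_le ha' (not_lt.1 hb'))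

lemma filter_not_lt_cons (s : Finset (Fin m)) (i : Fin m) (hi : i ∈ s) :
    (s.sort (· ≤ ·)).filter (fun j => !decide (j < i))
      = i :: (s.sort (· ≤ ·)).filter (fun j => decide (i < j)) := by
  have hnd : ((s.sort (· ≤ ·)).filter (fun j => decide (i < j))).Nodup :=
    List.Nodup.filter _ (Finset.sort_nodup _ _)
  have hic : i ∉ (s.sort (· ≤ ·)).filter (fun j => decide (i < j)) := by
    intro hcon
    have := (List.mem_filter.1 hcon).2
    simp at this
  refine List.eq_of_perm_of_sorted
    ((List.perm_ext_iff_of_nodup (List.Nodup.filter _ (Finset.sort_nodup _ _))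
      (List.nodup_cons.2 ⟨hic, hnd⟩)).2 ?_)
    (List.Pairwise.filter _ (Finset.pairwise_sort _ _)) ?_
  · intro a
    simp only [List.mem_filter, List.mem_cons, Finset.mem_sort, decide_eq_true_eq,
      Bool.not_eq_true', decide_eq_false_iff_not]
    constructor
    · rintro ⟨h1, h2⟩
      rcases lt_or_eq_of_le (not_lt.1 h2) with h | h
      · exact Or.inr ⟨h1, h⟩
      · exact Or.inl h.symm
    · rintro (rfl | ⟨h1, h2⟩)
      · exact ⟨hi, lt_irrefl _⟩
      · exact ⟨h1, not_lt.2 (le_of_lt h2)⟩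
  · refine List.pairwise_cons.2 ⟨?_, List.Pairwise.filter _ (Finset.pairwise_sort _ _)⟩
    intro b hb
    have := (List.mem_filter.1 hb).2
    simp only [decide_eq_true_eq] at this
    exact le_of_lt this

lemma sort_insert_split (s : Finset (Fin m)) (i : Fin m) (hi : i ∉ s) :
    (insert i s).sort (· ≤ ·) = (s.sort (· ≤ ·)).filter (fun j => decide (j < i))
      ++ i :: (s.sort (· ≤ ·)).filter (fun j => !decide (j < i)) := by
  have hnl : i ∉ s.sort (· ≤ ·) := fun hc => hi ((Finset.mem_sort _).1 hc)
  refine List.eq_of_perm_of_sorted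
    ((List.perm_ext_iff_of_nodup (Finset.sort_nodup _ _) ?_).2 ?_)
    (Finset.pairwise_sort _ _) ?_
  · refine List.nodup_append.2 ⟨List.Nodup.filter _ (Finset.sort_nodup _ _),
      List.nodup_cons.2 ⟨fun hc => hnl (List.mem_of_mem_filter hc),
        List.Nodup.filter _ (Finset.sort_nodup _ _)⟩, ?_⟩
    intro a ha _ hcon rfl
    have ha' := (List.mem_filter.1 ha).2
    simp only [decide_eq_true_eq] at ha'
    rcases List.mem_cons.1 hcon with rfl | hc
    · exact hnl (List.mem_of_mem_filter ha)
    · have := (List.mem_filter.1 hc).2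
      simp only [Bool.not_eq_true', decide_eq_false_iff_not] at this
      exact this ha'
  · intro a
    simp only [List.mem_append, List.mem_cons, List.mem_filter, Finset.mem_sort,
      Finset.mem_insert, decide_eq_true_eq, Bool.not_eq_true', decide_eq_false_iff_not]
    constructor
    · rintro (rfl | h)
      · exact Or.inr (Or.inl rfl)
      · by_cases hai : a < i
        · exact Or.inl ⟨h, hai⟩
        · exact Or.inr (Or.inr ⟨h, hai⟩)
    · rintro (⟨h, _⟩ | rfl | ⟨h, _⟩)
      · exact Or.inr h
      · exact Or.inl rfl
      · exact Or.inr h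
  · refine List.pairwise_append.2 ⟨List.Pairwise.filter _ (Finset.pairwise_sort _ _), ?_, ?_⟩
    · refine List.pairwise_cons.2 ⟨?_, List.Pairwise.filter _ (Finset.pairwise_sort _ _)⟩
      intro b hb
      have := (List.mem_filter.1 hb).2
      simp only [Bool.not_eq_true', decide_eq_false_iff_not] at this
      exact not_lt.1 this
    · intro a ha b hb
      have ha' := (List.mem_filter.1 ha).2
      simp only [decide_eq_true_eq] at ha'
      rcases List.mem_cons.1 hb with rfl | hc
      · exact le_of_lt ha'
      · have := (List.mem_filter.1 hc).2
        simp only [Bool.not_eq_true', decide_eq_false_iff_not] at this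
        exact le_of_lt (lt_of_lt_of_le ha' (not_lt.1 this))

lemma reduce (hJ : ∀ i, 1 ≤ J i) (c : Bool) (i : Fin m) (σ τ : Finset (Fin m))
    (hd : Disjoint σ τ) :
    mkQ K J (gen c i) * mkQ K J (wrd σ ((σ ∪ τ).sort (· ≤ ·)))
      ∈ Submodule.span ℤ (Set.range (monom K J)) := by
  set s := σ ∪ τ with hs
  set l := s.sort (· ≤ ·) with hl
  set l₁ := l.filter (fun j => decide (j < i)) with hl₁
  set l₂ := l.filter (fun j => !decide (j < i)) with hl₂
  have hsplit : l = l₁ ++ l₂ := sort_split s i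
  have hil₁ : i ∉ l₁ := by
    intro hcon
    have := (List.mem_filter.1 hcon).2
    simp at this
  have hmem_l₁ : ∀ j ∈ l₁, j < i := by
    intro j hj
    have := (List.mem_filter.1 hj).2
    simpa using this
  have hc1 : wrd (insert i σ) l₁ = wrd σ l₁ := by
    apply wrd_congr
    intro j hj
    have hji : j ≠ i := ne_of_lt (hmem_l₁ j hj)
    simp [Finset.mem_insert, hji]
  have key : mkQ K J (gen c i) * mkQ K J (wrd σ l)
      = ((-1 : ℤ) ^ (gdeg J c i * wdeg J σ l₁)) •
        (mkQ K J (wrd σ l₁) * mkQ K J (gen c i * wrd σ l₂)) := by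
    calc mkQ K J (gen c i) * mkQ K J (wrd σ l)
        = mkQ K J (gen c i * wrd σ l₁) * mkQ K J (wrd σ l₂) := by
          rw [← map_mul, hsplit, wrd_append, ← mul_assoc, map_mul]
      _ = ((-1 : ℤ) ^ (gdeg J c i * wdeg J σ l₁)) •
            (mkQ K J (wrd σ l₁ * gen c i) * mkQ K J (wrd σ l₂)) := by
          rw [comm_past K J c i σ l₁ hil₁, smul_mul_assoc]
      _ = ((-1 : ℤ) ^ (gdeg J c i * wdeg J σ l₁)) •
            (mkQ K J (wrd σ l₁) * mkQ K J (gen c i * wrd σ l₂)) := by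
          rw [map_mul, map_mul, mul_assoc]
  rw [key]
  apply Submodule.smul_mem
  by_cases his : i ∈ s
  · -- the index `i` occurs in the word
    set l₂' := l.filter (fun j => decide (i < j)) with hl₂'
    have hcons : l₂ = i :: l₂' := filter_not_lt_cons s i his
    have hmem_l₂' : ∀ j ∈ l₂', i < j := by
      intro j hj
      have := (List.mem_filter.1 hj).2
      simpa using this
    have hc2 : wrd (insert i σ) l₂' = wrd σ l₂' := by
      apply wrd_congr
      intro j hj
      have hji : j ≠ i := ne_of_gt (hmem_l₂' j hj)
      simp [Finset.mem_insert, hji]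
    by_cases hiσ : i ∈ σ
    · -- head of the remaining word is `ṽ^i`
      have hhead : mkQ K J (gen c i * wrd σ l₂)
          = mkQ K J (gen c i * gen true i) * mkQ K J (wrd σ l₂') := by
        rw [hcons, wrd_cons, if_pos hiσ, ← gen_true, ← mul_assoc, map_mul]
      cases c with
      | true =>
        have h0 : mkQ K J (gen true i * gen true i) = 0 := by
          have h := mkQ_rel K J (RrelK.sq true i)
          rw [if_neg (by have := hJ i; simp [gdeg]; omega), map_zero] at h
          exact h
        rw [hhead, h0, zero_mul, mul_zero]
        exact zero_mem _
      | false =>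
        have h0 : mkQ K J (gen false i * gen true i) = 0 := by
          have h := mkQ_rel K J (RrelK.uv i)
          rw [map_zero] at h
          rw [gen_false, gen_true]
          exact h
        rw [hhead, h0, zero_mul, mul_zero]
        exact zero_mem _
    · have hiτ : i ∈ τ := by
        have his' : i ∈ σ ∪ τ := his
        rcases Finset.mem_union.1 his' with h | h
        · exact absurd h hiσ
        · exact h
      have hhead : mkQ K J (gen c i * wrd σ l₂)
          = mkQ K J (gen c i * gen false i) * mkQ K J (wrd σ l₂') := by
        rw [hcons, wrd_cons, if_neg hiσ, ← gen_false, ← mul_assoc, map_mul]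
      cases c with
      | true =>
        by_cases hJ1 : J i - 1 = 0
        · have hvu : mkQ K J (gen true i * gen false i) = mkQ K J (gV i) := by
            have h := mkQ_rel K J (RrelK.vu i)
            rw [if_pos hJ1] at h
            rw [gen_true, gen_false]
            exact h
          have hset : insert i σ ∪ τ.erase i = s := by
            ext a
            by_cases hai : a = i
            · subst hai
              rw [hs]
              simp [hiτ]
            · rw [hs]
              simp [Finset.mem_union, Finset.mem_insert, Finset.mem_erase, hai]
          have hdisj : Disjoint (insert i σ) (τ.erase i) :=
            Finset.disjoint_insert_left.2 ⟨Finset.notMem_erase _ _,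
              Finset.disjoint_of_subset_right (Finset.erase_subset _ _) hd⟩
          have hw : mkQ K J (wrd (insert i σ) ((insert i σ ∪ τ.erase i).sort (· ≤ ·)))
              = mkQ K J (wrd σ l₁) * (mkQ K J (gV i) * mkQ K J (wrd σ l₂')) := by
            rw [hset, ← hl, hsplit, hcons, wrd_append, wrd_cons,
              if_pos (Finset.mem_insert_self _ _), hc1, hc2, map_mul, map_mul]
          rw [hhead, hvu, ← hw]
          exact mkQ_wrd_mem K J (insert i σ) (τ.erase i) hdisj
        · have hvu : mkQ K J (gen true i * gen false i) = 0 := by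
            have h := mkQ_rel K J (RrelK.vu i)
            rw [if_neg hJ1, map_zero] at h
            rw [gen_true, gen_false]
            exact h
          rw [hhead, hvu, zero_mul, mul_zero]
          exact zero_mem _
      | false =>
        by_cases hJ1 : gdeg J false i = 0
        · have huu : mkQ K J (gen false i * gen false i) = mkQ K J (gen false i) := by
            have h := mkQ_rel K J (RrelK.sq false i)
            rwa [if_pos hJ1] at h
          have hw : mkQ K J (wrd σ l)
              = mkQ K J (wrd σ l₁) * (mkQ K J (gen false i) * mkQ K J (wrd σ l₂')) := by
            rw [hsplit, hcons, wrd_append, wrd_cons, if_neg hiσ, ← gen_false, map_mul,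
              map_mul]
          rw [hhead, huu, ← hw, hl, hs]
          exact mkQ_wrd_mem K J σ τ hd
        · have huu : mkQ K J (gen false i * gen false i) = 0 := by
            have h := mkQ_rel K J (RrelK.sq false i)
            rw [if_neg hJ1, map_zero] at h
            exact h
          rw [hhead, huu, zero_mul, mul_zero]
          exact zero_mem _
  · -- the index `i` does not occur in the word
    have hins : (insert i s).sort (· ≤ ·) = l₁ ++ i :: l₂ := by
      rw [sort_insert_split s i his, ← hl]
    have hiσ' : i ∉ σ := fun hc => his (Finset.mem_union_left _ hc)
    have hiτ' : i ∉ τ := fun hc => his (Finset.mem_union_right _ hc)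
    have hjl : ∀ j ∈ l, j ≠ i := by
      intro j hj hji
      subst hji
      exact his ((Finset.mem_sort _).1 (hl ▸ hj))
    have hc2 : wrd (insert i σ) l₂ = wrd σ l₂ := by
      apply wrd_congr
      intro j hj
      have hji : j ≠ i := hjl j (hsplit ▸ List.mem_append_right l₁ hj)
      simp [Finset.mem_insert, hji]
    cases c with
    | true =>
      have hdisj : Disjoint (insert i σ) τ := Finset.disjoint_insert_left.2 ⟨hiτ', hd⟩
      have hset : insert i σ ∪ τ = insert i s := by
        rw [Finset.insert_union, hs]
      have hw : mkQ K J (wrd (insert i σ) ((insert i σ ∪ τ).sort (· ≤ ·)))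
          = mkQ K J (wrd σ l₁) * mkQ K J (gen true i * wrd σ l₂) := by
        rw [hset, hins, wrd_append, wrd_cons, if_pos (Finset.mem_insert_self _ _),
          ← gen_true, hc1, hc2, map_mul]
      rw [← hw]
      exact mkQ_wrd_mem K J (insert i σ) τ hdisj
    | false =>
      have hdisj : Disjoint σ (insert i τ) := Finset.disjoint_insert_right.2 ⟨hiσ', hd⟩
      have hset : σ ∪ insert i τ = insert i s := by
        rw [Finset.union_insert, hs]
      have hw : mkQ K J (wrd σ ((σ ∪ insert i τ).sort (· ≤ ·)))
          = mkQ K J (wrd σ l₁) * mkQ K J (gen false i * wrd σ l₂) := by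
        rw [hset, hins, wrd_append, wrd_cons, if_neg hiσ', ← gen_false, map_mul]
      rw [← hw]
      exact mkQ_wrd_mem K J σ (insert i τ) hdisj

end Reduce

section Main
variable (K : ASC m) (J : Fin m → ℕ)

lemma monom_span (hJ : ∀ i, 1 ≤ J i) :
    Submodule.span ℤ (Set.range (monom K J)) = ⊤ := by
  rw [eq_top_iff]
  intro r _
  obtain ⟨y, rfl⟩ := RingQuot.mkAlgHom_surjective ℤ (RrelK K J) r
  have hone : (mkQ K J 1 : RKJ K J) ∈ Submodule.span ℤ (Set.range (monom K J)) := by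
    have h1 : monom K J (emptyIdx K) = mkQ K J 1 := by
      show mkQ K J _ = mkQ K J 1
      congr 1
      show wrd ∅ ((∅ ∪ ∅ : Finset (Fin m)).sort (· ≤ ·)) = 1
      rw [Finset.union_empty, Finset.sort_empty]
      rfl
    rw [← h1]
    exact Submodule.subset_span ⟨_, rfl⟩
  have main : ∀ y z : FA m,
      mkQ K J z ∈ Submodule.span ℤ (Set.range (monom K J)) →
      mkQ K J (y * z) ∈ Submodule.span ℤ (Set.range (monom K J)) := by
    intro y
    refine FreeAlgebra.induction ℤ _ (motive := fun y => ∀ z : FA m,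
      mkQ K J z ∈ Submodule.span ℤ (Set.range (monom K J)) →
      mkQ K J (y * z) ∈ Submodule.span ℤ (Set.range (monom K J))) ?_ ?_ ?_ ?_ y
    · intro r z hz
      rw [← Algebra.smul_def, map_smul]
      exact Submodule.smul_mem _ _ hz
    · intro x z hz
      rw [map_mul]
      refine Submodule.span_induction
        (p := fun w _ => mkQ K J (FreeAlgebra.ι ℤ x) * w
          ∈ Submodule.span ℤ (Set.range (monom K J))) ?_ ?_ ?_ ?_ hz
      · intro w hw
        obtain ⟨b, rfl⟩ := hw
        show mkQ K J (FreeAlgebra.ι ℤ x) * monom K J b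
          ∈ Submodule.span ℤ (Set.range (monom K J))
        rw [monom_eq]
        cases x with
        | inl i =>
          show mkQ K J (gen true i) * _ ∈ _
          exact reduce K J hJ true i b.1.1 b.1.2 b.2.2
        | inr i =>
          show mkQ K J (gen false i) * _ ∈ _
          exact reduce K J hJ false i b.1.1 b.1.2 b.2.2
      · show mkQ K J (FreeAlgebra.ι ℤ x) * 0 ∈ Submodule.span ℤ (Set.range (monom K J))
        rw [mul_zero]
        exact zero_mem _
      · intro u v _ _ hu hv
        show mkQ K J (FreeAlgebra.ι ℤ x) * (u + v) ∈ Submodule.span ℤ (Set.range (monom K J))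
        rw [mul_add]
        exact add_mem hu hv
      · intro a u _ hu
        show mkQ K J (FreeAlgebra.ι ℤ x) * (a • u) ∈ Submodule.span ℤ (Set.range (monom K J))
        rw [mul_smul_comm]
        exact Submodule.smul_mem _ _ hu
    · intro a b ha hb z hz
      rw [mul_assoc]
      exact ha _ (hb _ hz)
    · intro a b ha hb z hz
      rw [add_mul, map_add]
      exact add_mem (ha z hz) (hb z hz)
  have hfin := main y 1 hone
  rwa [mul_one] at hfin

end Main

/-- `R*_K(J)` is a free `ℤ`-module with basis the square-free
monomials `ṽ^σ ũ^τ`, `σ ∈ K`, `τ ⊆ [m]`, `σ ∩ τ = ∅`. -/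
theorem stmt13 (K : ASC m) (J : Fin m → ℕ) (hJ : ∀ i, 1 ≤ J i) :
    LinearIndependent ℤ (monom K J) ∧
    Submodule.span ℤ (Set.range (monom K J)) = ⊤ :=
  ⟨monom_linearIndependent K J hJ, monom_span K J hJ⟩
end Rel
end
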